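/- Corollary (exactness of ALSO-X# for single packing DRCCPs with binary decisions and i.i.d. nonnegative random parameters). Suppose v* is attained at some x* ∈ X and the lower-level problem min{ CVaR_{1−ε}( w(x,ζ) − b₁ ) : x ∈ X, cᵀx ≤ v* } attains its minimum. Then this lower-level problem has a minimizer x̂ that is feasible; moreover, any such x̂ satisfies cᵀx̂ = v*, i.e., ALSO-X# is exact for this class of problems. -/

import Mathlib

open MeasureTheory

section AlsoXAux

variable {n : ℕ}

lemma alsoxN_zero (hn : 1 ≤ n) (Np : (Fin n → ℝ) → ℝ)
    (hNp : (∃ p : ℝ, 1 ≤ p ∧ ∀ ξ, Np ξ = (∑ i, |ξ i| ^ p) ^ (1 / p)) ∨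
           (∀ ξ, Np ξ = ⨆ i, |ξ i|)) : Np 0 = 0 := by
  rcases hNp with ⟨p, hp, h⟩ | h
  · have hp0 : p ≠ 0 := by linarith
    rw [h]
    simp [Real.zero_rpow hp0, Real.zero_rpow (inv_ne_zero hp0), Real.zero_rpow (one_div_ne_zero hp0)]
  · haveI : Nonempty (Fin n) := ⟨⟨0, hn⟩⟩
    rw [h]
    simp [ciSup_const]

lemma alsoxN_mono (Np : (Fin n → ℝ) → ℝ)
    (hNp : (∃ p : ℝ, 1 ≤ p ∧ ∀ ξ, Np ξ = (∑ i, |ξ i| ^ p) ^ (1 / p)) ∨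
           (∀ ξ, Np ξ = ⨆ i, |ξ i|))
    {a b : Fin n → ℝ} (h : ∀ i, |a i| ≤ |b i|) : Np a ≤ Np b := by
  rcases hNp with ⟨p, hp, hN⟩ | hN
  · rw [hN, hN]
    have hp0 : (0:ℝ) ≤ p := by linarith
    refine Real.rpow_le_rpow ?_ ?_ (div_nonneg zero_le_one hp0)
    · exact Finset.sum_nonneg fun i _ => Real.rpow_nonneg (abs_nonneg _) p
    · exact Finset.sum_le_sum fun i _ =>
        Real.rpow_le_rpow (abs_nonneg _) (h i) hp0
  · rw [hN, hN]
    exact ciSup_mono (Set.Finite.bddAbove (Set.finite_range fun j => |b j|)) h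

lemma alsoxN_coord (Np : (Fin n → ℝ) → ℝ)
    (hNp : (∃ p : ℝ, 1 ≤ p ∧ ∀ ξ, Np ξ = (∑ i, |ξ i| ^ p) ^ (1 / p)) ∨
           (∀ ξ, Np ξ = ⨆ i, |ξ i|))
    (a : Fin n → ℝ) (i : Fin n) : |a i| ≤ Np a := by
  rcases hNp with ⟨p, hp, hN⟩ | hN
  · rw [hN]
    have hp0 : (0:ℝ) < p := by linarith
    have h1 : |a i| = (|a i| ^ p) ^ (1 / p) := by
      rw [← Real.rpow_mul (abs_nonneg _), mul_one_div_cancel hp0.ne', Real.rpow_one]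
    rw [h1]
    refine Real.rpow_le_rpow (Real.rpow_nonneg (abs_nonneg _) p) ?_
      (div_nonneg zero_le_one hp0.le)
    exact Finset.single_le_sum (fun j _ => Real.rpow_nonneg (abs_nonneg _) p)
      (Finset.mem_univ i)
  · rw [hN]
    exact le_ciSup (Set.Finite.bddAbove (Set.finite_range fun j => |a j|)) i

lemma alsoxN_perm (Np : (Fin n → ℝ) → ℝ)
    (hNp : (∃ p : ℝ, 1 ≤ p ∧ ∀ ξ, Np ξ = (∑ i, |ξ i| ^ p) ^ (1 / p)) ∨
           (∀ ξ, Np ξ = ⨆ i, |ξ i|))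
    (σ : Equiv.Perm (Fin n)) (a : Fin n → ℝ) :
    Np (fun i => a (σ i)) = Np a := by
  rcases hNp with ⟨p, hp, hN⟩ | hN
  · rw [hN, hN]
    congr 1
    exact Equiv.sum_comp σ (fun i => |a i| ^ p)
  · rw [hN, hN]
    have : Set.range (fun i => |a (σ i)|) = Set.range (fun i => |a i|) :=
      Function.Surjective.range_comp σ.surjective (fun i => |a i|)
    rw [iSup, iSup, this]


variable (Np : (Fin n → ℝ) → ℝ)
    (hNp : (∃ p : ℝ, 1 ≤ p ∧ ∀ ξ, Np ξ = (∑ i, |ξ i| ^ p) ^ (1 / p)) ∨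
           (∀ ξ, Np ξ = ⨆ i, |ξ i|))
    (θ : ℝ)

include hNp

lemma alsox_bdd (x z : Fin n → ℝ)
    (hx : ∀ i, x i = 0 ∨ x i = 1) (hz : ∀ i, 0 ≤ z i) (hθ : 0 ≤ θ) :
    BddAbove {s | ∃ ξ : Fin n → ℝ, (∀ i, 0 ≤ ξ i) ∧ Np (ξ - z) ≤ θ ∧
      s = ∑ i, ξ i * x i} := by
  refine ⟨∑ i, (z i + θ), ?_⟩
  rintro s ⟨ξ, hξ0, hξN, rfl⟩
  refine Finset.sum_le_sum fun i _ => ?_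
  rcases hx i with h0 | h1
  · rw [h0, mul_zero]
    have := hz i; linarith
  · rw [h1, mul_one]
    have hc := alsoxN_coord Np hNp (ξ - z) i
    have : ξ i - z i ≤ θ := by
      have h2 : ξ i - z i ≤ |(ξ - z) i| := by
        rw [Pi.sub_apply]; exact le_abs_self _
      linarith
    linarith

lemma alsox_mem_self (x z : Fin n → ℝ) (hz : ∀ i, 0 ≤ z i) (hn : 1 ≤ n) (hθ : 0 ≤ θ) :
    (∑ i, z i * x i) ∈ {s | ∃ ξ : Fin n → ℝ, (∀ i, 0 ≤ ξ i) ∧ Np (ξ - z) ≤ θ ∧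
      s = ∑ i, ξ i * x i} := by
  refine ⟨z, hz, ?_, rfl⟩
  rw [sub_self, alsoxN_zero hn Np hNp]
  exact hθ

lemma alsox_sSup_mono (hn : 1 ≤ n) (hθ : 0 ≤ θ) (x x' : Fin n → ℝ)
    (hx : ∀ i, x i = 0 ∨ x i = 1) (hx' : ∀ i, x' i = 0 ∨ x' i = 1)
    (hle : ∀ i, x i ≤ x' i) (z : Fin n → ℝ) (hz : ∀ i, 0 ≤ z i) :
    sSup {s | ∃ ξ : Fin n → ℝ, (∀ i, 0 ≤ ξ i) ∧ Np (ξ - z) ≤ θ ∧ s = ∑ i, ξ i * x i}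
      ≤ sSup {s | ∃ ξ : Fin n → ℝ, (∀ i, 0 ≤ ξ i) ∧ Np (ξ - z) ≤ θ ∧
          s = ∑ i, ξ i * x' i} := by
  refine csSup_le ⟨_, alsox_mem_self Np hNp θ x z hz hn hθ⟩ ?_
  rintro s ⟨ξ, hξ0, hξN, rfl⟩
  have h1 : ∑ i, ξ i * x i ≤ ∑ i, ξ i * x' i :=
    Finset.sum_le_sum fun i _ => mul_le_mul_of_nonneg_left (hle i) (hξ0 i)
  exact h1.trans (le_csSup (alsox_bdd Np hNp θ x' z hx' hz hθ) ⟨ξ, hξ0, hξN, rfl⟩)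

lemma alsox_sSup_split (hn : 1 ≤ n) (hθ : 0 ≤ θ) (x z : Fin n → ℝ)
    (hx : ∀ i, x i = 0 ∨ x i = 1) (hz : ∀ i, 0 ≤ z i) :
    sSup {s | ∃ ξ : Fin n → ℝ, (∀ i, 0 ≤ ξ i) ∧ Np (ξ - z) ≤ θ ∧ s = ∑ i, ξ i * x i}
      = (∑ i, z i * x i) +
        sSup {s | ∃ ξ : Fin n → ℝ, (∀ i, 0 ≤ ξ i) ∧ Np (ξ - 0) ≤ θ ∧
          s = ∑ i, ξ i * x i} := by
  have hz0 : ∀ i, (0:ℝ) ≤ (0 : Fin n → ℝ) i := fun i => le_refl 0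
  have hbdd0 := alsox_bdd Np hNp θ x (0 : Fin n → ℝ) hx hz0 hθ
  have hbddz := alsox_bdd Np hNp θ x z hx hz hθ
  have hne0 : {s | ∃ ξ : Fin n → ℝ, (∀ i, 0 ≤ ξ i) ∧ Np (ξ - 0) ≤ θ ∧
      s = ∑ i, ξ i * x i}.Nonempty := ⟨_, alsox_mem_self Np hNp θ x 0 hz0 hn hθ⟩
  have hnez : {s | ∃ ξ : Fin n → ℝ, (∀ i, 0 ≤ ξ i) ∧ Np (ξ - z) ≤ θ ∧
      s = ∑ i, ξ i * x i}.Nonempty := ⟨_, alsox_mem_self Np hNp θ x z hz hn hθ⟩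
  apply le_antisymm
  · refine csSup_le hnez ?_
    rintro s ⟨ξ, hξ0, hξN, rfl⟩
    set d : Fin n → ℝ := fun i => max (ξ i - z i) 0 with hd
    have hd0 : ∀ i, 0 ≤ d i := fun i => le_max_right _ _
    have hdN : Np (d - 0) ≤ θ := by
      rw [sub_zero]
      refine (alsoxN_mono Np hNp (fun i => ?_)).trans hξN
      rw [abs_of_nonneg (hd0 i), Pi.sub_apply]
      exact max_le (le_abs_self _) (abs_nonneg _)
    have hmem : (∑ i, d i * x i) ∈ {s | ∃ ξ : Fin n → ℝ, (∀ i, 0 ≤ ξ i) ∧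
        Np (ξ - 0) ≤ θ ∧ s = ∑ i, ξ i * x i} := ⟨d, hd0, hdN, rfl⟩
    have h1 : ∑ i, ξ i * x i ≤ ∑ i, z i * x i + ∑ i, d i * x i := by
      rw [← Finset.sum_add_distrib]
      refine Finset.sum_le_sum fun i _ => ?_
      rcases hx i with h0 | h1
      · simp [h0]
      · simp only [h1, mul_one]
        have : ξ i - z i ≤ d i := le_max_left _ _
        linarith
    exact h1.trans (add_le_add le_rfl (le_csSup hbdd0 hmem))
  · have h1 : sSup {s | ∃ ξ : Fin n → ℝ, (∀ i, 0 ≤ ξ i) ∧ Np (ξ - 0) ≤ θ ∧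
        s = ∑ i, ξ i * x i} ≤
        sSup {s | ∃ ξ : Fin n → ℝ, (∀ i, 0 ≤ ξ i) ∧ Np (ξ - z) ≤ θ ∧
          s = ∑ i, ξ i * x i} - ∑ i, z i * x i := by
      refine csSup_le hne0 ?_
      rintro s ⟨ξ, hξ0, hξN, rfl⟩
      rw [le_sub_iff_add_le, add_comm]
      have hmem : (∑ i, z i * x i + ∑ i, ξ i * x i) ∈
          {s | ∃ ξ : Fin n → ℝ, (∀ i, 0 ≤ ξ i) ∧ Np (ξ - z) ≤ θ ∧
            s = ∑ i, ξ i * x i} := by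
        refine ⟨fun i => z i + ξ i, fun i => add_nonneg (hz i) (hξ0 i), ?_, ?_⟩
        · have : (fun i => z i + ξ i) - z = ξ - 0 := by
            funext i; simp [Pi.sub_apply]
          rw [this]; exact hξN
        · rw [← Finset.sum_add_distrib]
          exact Finset.sum_congr rfl fun i _ => by ring
      exact le_csSup hbddz hmem
    linarith

end AlsoXAux


/-- **Exactness of ALSO-X# for single packing DRCCPs with binary decisions and i.i.d.
nonnegative random parameters.**  `Np` is a `p`-norm with `p ∈ [1,∞]`, `w x ζ` is the type-∞
Wasserstein worst-case packing value, and `x` is feasible when `P(w(x,ζ) ≤ b₁) ≥ 1-ε`.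
If `v* = cᵀx*` is attained and the lower-level CVaR problem at level `v*` attains its minimum,
then the lower-level problem has a feasible minimizer, and any feasible minimizer `x̂`
satisfies `cᵀx̂ = v*`. -/
theorem alsoxSharp_exact_packing
    (n : ℕ) (hn : 1 ≤ n)
    (c : Fin n → ℝ) (b₁ : ℝ) (hb₁ : 0 ≤ b₁) (θ : ℝ) (hθ : 0 ≤ θ)
    (ε : ℝ) (hε : ε ∈ Set.Ioo (0 : ℝ) 1)
    -- the `p`-norm on ℝⁿ for some `p ∈ [1,∞]`
    (Np : (Fin n → ℝ) → ℝ)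
    (hNp : (∃ p : ℝ, 1 ≤ p ∧ ∀ ξ, Np ξ = (∑ i, |ξ i| ^ p) ^ (1 / p)) ∨
           (∀ ξ, Np ξ = ⨆ i, |ξ i|))
    -- binary decision set
    (X : Set (Fin n → ℝ)) (hX : ∀ x ∈ X, ∀ i, x i = 0 ∨ x i = 1)
    -- i.i.d. nonnegative integrable random parameters
    {Ω : Type*} [MeasurableSpace Ω] (μ : Measure Ω) [IsProbabilityMeasure μ]
    (ζ : Fin n → Ω → ℝ)
    (hmeas : ∀ i, Measurable (ζ i))
    (hindep : ProbabilityTheory.iIndepFun ζ μ)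
    (hident : ∀ i j, ProbabilityTheory.IdentDistrib (ζ i) (ζ j) μ μ)
    (hnonneg : ∀ i ω, 0 ≤ ζ i ω)
    (hint : ∀ i, Integrable (ζ i) μ)
    -- the type-∞ Wasserstein worst-case value of the packing constraint
    (w : (Fin n → ℝ) → (Fin n → ℝ) → ℝ)
    (hw : ∀ x z, w x z =
      sSup {s | ∃ ξ : Fin n → ℝ, (∀ i, 0 ≤ ξ i) ∧ Np (ξ - z) ≤ θ ∧ s = ∑ i, ξ i * x i})
    -- feasibility
    (feasible : (Fin n → ℝ) → Prop)
    (hfeas : ∀ x, feasible x ↔ 1 - ε ≤ (μ {ω | w x (fun i => ζ i ω) ≤ b₁}).toReal)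
    -- conditional value-at-risk
    (CVaR : (Ω → ℝ) → ℝ)
    (hCVaR : ∀ Z : Ω → ℝ, CVaR Z = ⨅ β : ℝ, (β + ε⁻¹ * ∫ ω, max (Z ω - β) 0 ∂μ))
    -- `v* = cᵀx*` is attained at `x*`
    (xstar : Fin n → ℝ) (hx1 : xstar ∈ X) (hx2 : feasible xstar)
    (hx3 : ∀ x ∈ X, feasible x → ∑ i, c i * xstar i ≤ ∑ i, c i * x i)
    -- the lower-level objective and feasible set
    (g : (Fin n → ℝ) → ℝ)
    (hg : ∀ x, g x = CVaR (fun ω => w x (fun i => ζ i ω) - b₁))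
    (S : Set (Fin n → ℝ))
    (hS : S = {x ∈ X | ∑ i, c i * x i ≤ ∑ i, c i * xstar i})
    -- the lower-level problem attains its minimum
    (hattain : ∃ x ∈ S, IsMinOn g S x) :
    (∃ xhat ∈ S, IsMinOn g S xhat ∧ feasible xhat) ∧
    (∀ xhat ∈ S, IsMinOn g S xhat → feasible xhat →
      ∑ i, c i * xhat i = ∑ i, c i * xstar i) := by
  classical
  obtain ⟨hε0, hε1⟩ := hε
  set i0 : Fin n := ⟨0, hn⟩ with hi0
  set ζv : Ω → (Fin n → ℝ) := fun ω i => ζ i ω with hζvdef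
  have hζv : Measurable ζv := measurable_pi_lambda _ hmeas
  set ν : Measure ℝ := Measure.map (ζ i0) μ with hνdef
  have hνi : ∀ i, Measure.map (ζ i) μ = ν := fun i => (hident i i0).map_eq
  haveI hνprob : IsProbabilityMeasure ν :=
    Measure.isProbabilityMeasure_map (hmeas i0).aemeasurable
  -- the joint law is the product measure
  have hmap : Measure.pi (fun _ : Fin n => ν) = Measure.map ζv μ := by
    refine Measure.pi_eq fun s hs => ?_
    rw [Measure.map_apply hζv (MeasurableSet.univ_pi hs)]
    have hpre : ζv ⁻¹' Set.pi Set.univ s = ⋂ i, ζ i ⁻¹' s i := by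
      ext ω
      simp [ζv, Set.mem_pi, Set.mem_iInter]
    rw [hpre, hindep.meas_iInter fun i => ⟨s i, hs i, rfl⟩]
    exact Finset.prod_congr rfl fun i _ => by
      rw [← hνi i, Measure.map_apply (hmeas i) (hs i)]
  -- basic objects
  set T : Finset (Fin n) → Ω → ℝ := fun A ω => ∑ i ∈ A, ζ i ω with hTdef
  set ind : Finset (Fin n) → (Fin n → ℝ) := fun A i => if i ∈ A then 1 else 0
    with hinddef
  have hind : ∀ A i, ind A i = 0 ∨ ind A i = 1 := by
    intro A i
    by_cases h : i ∈ A <;> simp [ind, h]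
  have hindle : ∀ (A B : Finset (Fin n)), A ⊆ B → ∀ i, ind A i ≤ ind B i := by
    intro A B hAB i
    by_cases h : i ∈ A
    · simp [ind, h, hAB h]
    · simp only [ind, if_neg h]
      by_cases h2 : i ∈ B <;> simp [h2]
  have hsumind : ∀ (A : Finset (Fin n)) (v : Fin n → ℝ),
      ∑ i, v i * ind A i = ∑ i ∈ A, v i := by
    intro A v
    simp only [ind, mul_ite, mul_one, mul_zero]
    rw [Finset.sum_ite_mem, Finset.univ_inter]
  set C : Finset (Fin n) → ℝ := fun A => w (ind A) 0 with hCdef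
  set t : Finset (Fin n) → ℝ := fun A => b₁ - C A with htdef
  -- the split of w
  have hwkey : ∀ (A : Finset (Fin n)) (ω : Ω),
      w (ind A) (fun i => ζ i ω) = T A ω + C A := by
    intro A ω
    simp only [hTdef, hCdef]
    rw [hw, hw, alsox_sSup_split Np hNp θ hn hθ _ _ (hind A) (fun i => hnonneg i ω),
      hsumind]
  -- support representation of binary vectors
  have hrepr : ∀ x ∈ X, x = ind (Finset.univ.filter fun i => x i = 1) := by
    intro x hxX
    funext i
    rcases hX x hxX i with h | h <;>
      simp [ind, Finset.mem_filter, h]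
  -- feasibility in reduced form
  have hfeasA : ∀ A : Finset (Fin n),
      feasible (ind A) ↔ 1 - ε ≤ (μ {ω | T A ω ≤ t A}).toReal := by
    intro A
    rw [hfeas]
    have : {ω | w (ind A) (fun i => ζ i ω) ≤ b₁} = {ω | T A ω ≤ t A} := by
      ext ω
      rw [Set.mem_setOf_eq, Set.mem_setOf_eq, hwkey]
      simp only [htdef]
      constructor <;> intro h <;> linarith
    rw [this]
  -- the reduced objective
  set G : Finset (Fin n) → ℝ := fun A =>
    ⨅ β : ℝ, (β + ε⁻¹ * ∫ ω, max (T A ω - t A - β) 0 ∂μ) with hGdef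
  have hgA : ∀ A : Finset (Fin n), g (ind A) = G A := by
    intro A
    rw [hg, hCVaR]
    simp only [hGdef]
    refine iInf_congr fun β => ?_
    congr 1
    congr 1
    refine integral_congr_ae (Filter.Eventually.of_forall fun ω => ?_)
    simp only [hwkey, htdef]
    congr 1
    ring
  -- integrability
  have hTint : ∀ A : Finset (Fin n), Integrable (T A) μ := fun A =>
    integrable_finset_sum _ fun i _ => hint i
  have hmaxint : ∀ (A : Finset (Fin n)) (a : ℝ),
      Integrable (fun ω => max (T A ω - a) 0) μ := fun A a =>
    ((hTint A).sub (integrable_const a)).pos_part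
  -- lower bound for the CVaR objective
  have hGbdd : ∀ A : Finset (Fin n),
      BddBelow (Set.range fun β : ℝ =>
        β + ε⁻¹ * ∫ ω, max (T A ω - t A - β) 0 ∂μ) := by
    intro A
    refine ⟨∫ ω, (T A ω - t A) ∂μ, ?_⟩
    rintro r ⟨β, rfl⟩
    have hZint : Integrable (fun ω => T A ω - t A) μ :=
      (hTint A).sub (integrable_const _)
    have hI0 : 0 ≤ ∫ ω, max (T A ω - t A - β) 0 ∂μ :=
      integral_nonneg fun ω => le_max_right _ _
    have hI1 : (∫ ω, (T A ω - t A) ∂μ) - β ≤ ∫ ω, max (T A ω - t A - β) 0 ∂μ := by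
      have h1 : ∫ ω, (T A ω - t A - β) ∂μ = (∫ ω, (T A ω - t A) ∂μ) - β := by
        rw [integral_sub hZint (integrable_const β), integral_const]
        simp
      rw [← h1]
      refine integral_mono (hZint.sub (integrable_const β))
        (by
          have := hmaxint A (t A + β)
          simpa [sub_sub] using this)
        fun ω => le_max_left _ _
    have hεinv1 : (1:ℝ) ≤ ε⁻¹ := (one_le_inv₀ hε0).mpr hε1.le
    rcases le_total (∫ ω, (T A ω - t A) ∂μ) β with hc | hc
    · have : 0 ≤ ε⁻¹ * ∫ ω, max (T A ω - t A - β) 0 ∂μ :=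
        mul_nonneg (by positivity) hI0
      linarith
    · have h2 : (∫ ω, (T A ω - t A) ∂μ) - β ≤
          ε⁻¹ * ∫ ω, max (T A ω - t A - β) 0 ∂μ := by
        calc (∫ ω, (T A ω - t A) ∂μ) - β
            ≤ ∫ ω, max (T A ω - t A - β) 0 ∂μ := hI1
          _ ≤ ε⁻¹ * ∫ ω, max (T A ω - t A - β) 0 ∂μ := by
              nlinarith [hI0]
      linarith
  -- monotonicity in the support
  have hCmono : ∀ (A B : Finset (Fin n)), A ⊆ B → C A ≤ C B := by
    intro A B hAB
    simp only [hCdef]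
    rw [hw, hw]
    exact alsox_sSup_mono Np hNp θ hn hθ _ _ (hind A) (hind B) (hindle A B hAB) 0
      (fun i => le_refl 0)
  have hTmono : ∀ (A B : Finset (Fin n)), A ⊆ B → ∀ ω, T A ω ≤ T B ω := by
    intro A B hAB ω
    exact Finset.sum_le_sum_of_subset_of_nonneg hAB fun i _ _ => hnonneg i ω
  have hGmono : ∀ (A B : Finset (Fin n)), A ⊆ B → G A ≤ G B := by
    intro A B hAB
    simp only [hGdef]
    refine ciInf_mono (hGbdd A) fun β => ?_
    refine add_le_add le_rfl (mul_le_mul_of_nonneg_left ?_ (by positivity))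
    refine integral_mono
      (by simpa [sub_sub] using hmaxint A (t A + β))
      (by simpa [sub_sub] using hmaxint B (t B + β)) fun ω => ?_
    refine max_le_max ?_ le_rfl
    have h1 := hTmono A B hAB ω
    have h2 := hCmono A B hAB
    simp only [htdef]
    linarith
  have hfeasmono : ∀ (A B : Finset (Fin n)), A ⊆ B →
      1 - ε ≤ (μ {ω | T B ω ≤ t B}).toReal →
      1 - ε ≤ (μ {ω | T A ω ≤ t A}).toReal := by
    intro A B hAB h
    refine h.trans (ENNReal.toReal_mono (measure_ne_top μ _) (measure_mono ?_))
    intro ω hω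
    simp only [Set.mem_setOf_eq, htdef] at hω ⊢
    have h1 := hTmono A B hAB ω
    have h2 := hCmono A B hAB
    linarith
  -- permutation machinery
  have hperm : ∀ (A B : Finset (Fin n)), A.card = B.card →
      ∃ σ : Equiv.Perm (Fin n), ∀ v : Fin n → ℝ, ∑ i ∈ A, v (σ i) = ∑ i ∈ B, v i := by
    intro A B hcard
    have hc : Fintype.card {x // x ∈ A} = Fintype.card {x // x ∈ B} := by
      simpa [Fintype.card_coe] using hcard
    let e : {x // x ∈ A} ≃ {x // x ∈ B} := Fintype.equivOfCardEq hc
    refine ⟨e.extendSubtype, fun v => ?_⟩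
    have hinj : Set.InjOn e.extendSubtype A := fun a _ b _ h =>
      e.extendSubtype.injective h
    have himg : A.image e.extendSubtype = B := by
      refine Finset.eq_of_subset_of_card_le ?_ ?_
      · intro j hj
        obtain ⟨i, hi, rfl⟩ := Finset.mem_image.mp hj
        exact e.extendSubtype_mem i hi
      · rw [Finset.card_image_of_injOn hinj, hcard]
    calc ∑ i ∈ A, v (e.extendSubtype i)
        = ∑ j ∈ A.image e.extendSubtype, v j := (Finset.sum_image
          (fun a ha b hb h => hinj ha hb h)).symm
      _ = ∑ j ∈ B, v j := by rw [himg]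
  have hCcard : ∀ (A B : Finset (Fin n)), A.card = B.card → C A = C B := by
    intro A B hcard
    have key : ∀ (A B : Finset (Fin n)), A.card = B.card →
        {s | ∃ ξ : Fin n → ℝ, (∀ i, 0 ≤ ξ i) ∧ Np (ξ - 0) ≤ θ ∧
          s = ∑ i, ξ i * ind B i} ⊆
        {s | ∃ ξ : Fin n → ℝ, (∀ i, 0 ≤ ξ i) ∧ Np (ξ - 0) ≤ θ ∧
          s = ∑ i, ξ i * ind A i} := by
      intro A B hcard s hs
      obtain ⟨ξ, hξ0, hξN, rfl⟩ := hs
      obtain ⟨σ, hσ⟩ := hperm A B hcard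
      refine ⟨fun i => ξ (σ i), fun i => hξ0 _, ?_, ?_⟩
      · rw [sub_zero] at hξN ⊢
        rw [alsoxN_perm Np hNp σ ξ]
        exact hξN
      · rw [hsumind, hsumind, hσ ξ]
    simp only [hCdef]
    rw [hw, hw]
    refine le_antisymm ?_ ?_
    · exact csSup_le_csSup
        (alsox_bdd Np hNp θ _ 0 (hind B) (fun i => le_refl 0) hθ)
        ⟨_, alsox_mem_self Np hNp θ _ 0 (fun i => le_refl 0) hn hθ⟩
        (key B A hcard.symm)
    · exact csSup_le_csSup
        (alsox_bdd Np hNp θ _ 0 (hind A) (fun i => le_refl 0) hθ)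
        ⟨_, alsox_mem_self Np hNp θ _ 0 (fun i => le_refl 0) hn hθ⟩
        (key A B hcard)
  -- measurable sums
  have hms : ∀ A : Finset (Fin n), Measurable fun y : Fin n → ℝ => ∑ i ∈ A, y i :=
    fun A => Finset.measurable_sum A fun i _ => measurable_pi_apply i
  -- equivalence from a permutation
  have hmeaseq : ∀ (A B : Finset (Fin n)), A.card = B.card → ∀ r : ℝ,
      μ {ω | T A ω ≤ r} = μ {ω | T B ω ≤ r} := by
    intro A B hcard r
    obtain ⟨σ, hσ⟩ := hperm A B hcard
    set e := MeasurableEquiv.piCongrLeft (fun _ : Fin n => ℝ) σ.symm with hedef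
    have he : ∀ (y : Fin n → ℝ) (i : Fin n), e y i = y (σ i) := by
      intro y i
      have h2 := MeasurableEquiv.piCongrLeft_apply_apply σ.symm
        (β := fun _ : Fin n => ℝ) y (σ i)
      rwa [Equiv.symm_apply_apply] at h2
    have mp : MeasurePreserving e (Measure.pi fun _ : Fin n => ν)
        (Measure.pi fun _ : Fin n => ν) :=
      measurePreserving_piCongrLeft (fun _ : Fin n => ν) σ.symm
    have hsA : MeasurableSet {y : Fin n → ℝ | ∑ i ∈ A, y i ≤ r} :=
      measurableSet_le (hms A) measurable_const
    have hsB : MeasurableSet {y : Fin n → ℝ | ∑ i ∈ B, y i ≤ r} :=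
      measurableSet_le (hms B) measurable_const
    have h1 : {ω | T A ω ≤ r} = ζv ⁻¹' {y | ∑ i ∈ A, y i ≤ r} := rfl
    have h2 : {ω | T B ω ≤ r} = ζv ⁻¹' {y | ∑ i ∈ B, y i ≤ r} := rfl
    rw [h1, h2, ← Measure.map_apply hζv hsA, ← Measure.map_apply hζv hsB, ← hmap]
    have hpre : e ⁻¹' {y : Fin n → ℝ | ∑ i ∈ A, y i ≤ r}
        = {y : Fin n → ℝ | ∑ i ∈ B, y i ≤ r} := by
      ext y
      simp only [Set.mem_preimage, Set.mem_setOf_eq]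
      rw [Finset.sum_congr rfl fun i _ => he y i, hσ y]
    rw [← hpre]
    exact (mp.measure_preimage hsA.nullMeasurableSet).symm
  have hinteq : ∀ (A B : Finset (Fin n)), A.card = B.card → ∀ a : ℝ,
      ∫ ω, max (T A ω - a) 0 ∂μ = ∫ ω, max (T B ω - a) 0 ∂μ := by
    intro A B hcard a
    obtain ⟨σ, hσ⟩ := hperm A B hcard
    set e := MeasurableEquiv.piCongrLeft (fun _ : Fin n => ℝ) σ.symm with hedef
    have he : ∀ (y : Fin n → ℝ) (i : Fin n), e y i = y (σ i) := by
      intro y i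
      have h2 := MeasurableEquiv.piCongrLeft_apply_apply σ.symm
        (β := fun _ : Fin n => ℝ) y (σ i)
      rwa [Equiv.symm_apply_apply] at h2
    have mp : MeasurePreserving e (Measure.pi fun _ : Fin n => ν)
        (Measure.pi fun _ : Fin n => ν) :=
      measurePreserving_piCongrLeft (fun _ : Fin n => ν) σ.symm
    have hfm : ∀ A : Finset (Fin n),
        Measurable fun y : Fin n → ℝ => max (∑ i ∈ A, y i - a) 0 := fun A =>
      ((hms A).sub measurable_const).max measurable_const
    calc ∫ ω, max (T A ω - a) 0 ∂μ
        = ∫ y, max (∑ i ∈ A, y i - a) 0 ∂(Measure.map ζv μ) :=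
          (integral_map hζv.aemeasurable (hfm A).aestronglyMeasurable).symm
      _ = ∫ y, max (∑ i ∈ A, y i - a) 0 ∂(Measure.pi fun _ : Fin n => ν) := by
          rw [← hmap]
      _ = ∫ y, max (∑ i ∈ A, e y i - a) 0 ∂(Measure.pi fun _ : Fin n => ν) :=
          (mp.integral_comp e.measurableEmbedding _).symm
      _ = ∫ y, max (∑ i ∈ B, y i - a) 0 ∂(Measure.pi fun _ : Fin n => ν) := by
          refine integral_congr_ae (Filter.Eventually.of_forall fun y => ?_)
          show (∑ i ∈ A, e y i - a) ⊔ 0 = (∑ i ∈ B, y i - a) ⊔ 0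
          rw [Finset.sum_congr rfl fun i _ => he y i, hσ y]
      _ = ∫ y, max (∑ i ∈ B, y i - a) 0 ∂(Measure.map ζv μ) := by rw [← hmap]
      _ = ∫ ω, max (T B ω - a) 0 ∂μ :=
          integral_map hζv.aemeasurable (hfm B).aestronglyMeasurable
  have hGcard : ∀ (A B : Finset (Fin n)), A.card = B.card → G A = G B := by
    intro A B hcard
    have ht : t A = t B := by simp only [htdef, hCcard A B hcard]
    simp only [hGdef]
    refine iInf_congr fun β => ?_
    rw [ht]
    congr 1
    congr 1
    rw [show (fun ω => max (T A ω - t B - β) 0)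
        = fun ω => max (T A ω - (t B + β)) 0 by funext ω; rw [sub_sub]]
    rw [show (fun ω => max (T B ω - t B - β) 0)
        = fun ω => max (T B ω - (t B + β)) 0 by funext ω; rw [sub_sub]]
    exact hinteq A B hcard (t B + β)
  -- put everything together
  obtain ⟨x₀, hx₀S, hx₀min⟩ := hattain
  have hx₀X : x₀ ∈ X := by rw [hS] at hx₀S; exact hx₀S.1
  have hxstarS : xstar ∈ S := by rw [hS]; exact ⟨hx1, le_refl _⟩
  set A₀ : Finset (Fin n) := Finset.univ.filter fun i => x₀ i = 1 with hA₀
  set As : Finset (Fin n) := Finset.univ.filter fun i => xstar i = 1 with hAs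
  have hx₀r : x₀ = ind A₀ := hrepr x₀ hx₀X
  have hxsr : xstar = ind As := hrepr xstar hx1
  have hfeasstar : 1 - ε ≤ (μ {ω | T As ω ≤ t As}).toReal := by
    rw [← hfeasA As, ← hxsr]
    exact hx2
  refine ⟨?_, ?_⟩
  · by_cases hc : A₀.card ≤ As.card
    · obtain ⟨B, hBsub, hBcard⟩ := Finset.exists_subset_card_eq hc
      have h2 : 1 - ε ≤ (μ {ω | T B ω ≤ t B}).toReal :=
        hfeasmono B As hBsub hfeasstar
      have htB : t A₀ = t B := by
        simp only [htdef, hCcard A₀ B hBcard.symm]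
      have h3 : 1 - ε ≤ (μ {ω | T A₀ ω ≤ t A₀}).toReal := by
        rw [htB, hmeaseq A₀ B hBcard.symm (t B)]
        exact h2
      refine ⟨x₀, hx₀S, hx₀min, ?_⟩
      rw [hx₀r, hfeasA A₀]
      exact h3
    · push_neg at hc
      obtain ⟨B, hBsub, hBcard⟩ := Finset.exists_subset_card_eq hc.le
      have hgstar : g xstar = G As := by rw [hxsr, hgA]
      have hgx₀ : g x₀ = G A₀ := by rw [hx₀r, hgA]
      have h4 : g xstar ≤ g x₀ := by
        rw [hgstar, hgx₀, hGcard As B hBcard.symm]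
        exact hGmono B A₀ hBsub
      have hminstar : IsMinOn g S xstar := by
        intro y hy
        exact le_trans h4 (hx₀min hy)
      exact ⟨xstar, hxstarS, hminstar, hx2⟩
  · intro xh hxhS _ hfeasxh
    rw [hS] at hxhS
    exact le_antisymm hxhS.2 (hx3 xh hxhS.1 hfeasxh)
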